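/- Variance comparison under distribution shift (Lemma 10–12 style): Let p_1 and p_2 be probability distributions on a finite set S with KL(p_1 ‖ p_2) ≤ α, and let f, g: S → [0, b]. Then (a) |p_1^T f − p_2^T f| ≤ √(2·Var_{p_2}(f)·α) + (2/3)·b·α; (b) Var_{p_2}(f) ≤ 2·Var_{p_1}(f) + 4b²α and Var_{p_1}(f) ≤ 2·Var_{p_2}(f) + 4b²α; (c) Var_{p_1}(f) ≤ 2·Var_{p_1}(g) + 2b·p_1^T|f − g|. -/

import Mathlib

private lemma klvc_hd3 (x : ℝ) : HasDerivAt (fun u : ℝ => Real.exp u - u - 1) (Real.exp x - 1) x := by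
  have := ((Real.hasDerivAt_exp x).sub (hasDerivAt_id x)).sub_const 1
  simpa using this

private lemma klvc_hd4 (x : ℝ) : HasDerivAt (fun u : ℝ => 2*(1 - u/3)) (-(2/3)) x := by
  have := (((hasDerivAt_id x).div_const 3).const_sub 1).const_mul 2
  exact this.congr_deriv (by norm_num)

private lemma klvc_hd1 (x : ℝ) :
    HasDerivAt (fun u : ℝ => u^2 - 2*(1 - u/3)*(Real.exp u - u - 1))
      (2*x + (2/3)*(Real.exp x - x - 1) - 2*(1 - x/3)*(Real.exp x - 1)) x := by
  have h1 : HasDerivAt (fun u : ℝ => u^2) (2*x) x := by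
    simpa using (hasDerivAt_pow 2 x)
  have := h1.sub ((klvc_hd4 x).mul (klvc_hd3 x))
  exact this.congr_deriv (by ring)

private lemma klvc_hd2 (x : ℝ) :
    HasDerivAt (fun u : ℝ => 2*u + (2/3)*(Real.exp u - u - 1) - 2*(1 - u/3)*(Real.exp u - 1))
      ((2/3)*(1 + (x-1)*Real.exp x)) x := by
  have h1 : HasDerivAt (fun u : ℝ => 2*u) 2 x := by simpa using (hasDerivAt_id x).const_mul 2
  have h2 : HasDerivAt (fun u : ℝ => (2/3)*(Real.exp u - u - 1)) ((2/3)*(Real.exp x - 1)) x :=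
    (klvc_hd3 x).const_mul (2/3)
  have h5 : HasDerivAt (fun u : ℝ => Real.exp u - 1) (Real.exp x) x := by
    simpa using (Real.hasDerivAt_exp x).sub_const 1
  have := (h1.add h2).sub ((klvc_hd4 x).mul h5)
  exact this.congr_deriv (by ring)
lemma exp_key (u : ℝ) : 2*(1 - u/3)*(Real.exp u - u - 1) ≤ u^2 := by
  set G : ℝ → ℝ := fun u => u^2 - 2*(1 - u/3)*(Real.exp u - u - 1) with hG
  set G' : ℝ → ℝ := fun u => 2*u + (2/3)*(Real.exp u - u - 1) - 2*(1 - u/3)*(Real.exp u - 1) with hG'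
  have hdd : ∀ x : ℝ, 0 ≤ (2/3)*(1 + (x-1)*Real.exp x) := by
    intro x
    have h := Real.add_one_le_exp (-x)
    have hx : Real.exp (-x) * Real.exp x = 1 := by
      rw [← Real.exp_add]; simp
    nlinarith [Real.exp_pos x, mul_le_mul_of_nonneg_right h (Real.exp_pos x).le]
  have hmono : Monotone G' := by
    apply monotone_of_deriv_nonneg
    · exact fun x => (klvc_hd2 x).differentiableAt
    · intro x; rw [(klvc_hd2 x).deriv]; exact hdd x
  have hG'0 : G' 0 = 0 := by simp [hG']
  have hG0 : G 0 = 0 := by simp [hG]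
  have key : 0 ≤ G u := by
    rcases le_or_gt 0 u with h | h
    · have hm : MonotoneOn G (Set.Ici 0) := by
        apply monotoneOn_of_deriv_nonneg (convex_Ici 0)
        · exact (Continuous.continuousOn (by fun_prop))
        · intro x hx; exact (klvc_hd1 x).differentiableAt.differentiableWithinAt
        · intro x hx
          rw [(klvc_hd1 x).deriv]
          rw [interior_Ici] at hx
          have h0 : G' 0 ≤ G' x := hmono (le_of_lt hx)
          rw [hG'0] at h0
          simpa [hG'] using h0
      have := hm Set.self_mem_Ici h h
      rw [hG0] at this
      exact this
    · have hm : AntitoneOn G (Set.Iic 0) := by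
        apply antitoneOn_of_deriv_nonpos (convex_Iic 0)
        · exact (Continuous.continuousOn (by fun_prop))
        · intro x hx; exact (klvc_hd1 x).differentiableAt.differentiableWithinAt
        · intro x hx
          rw [(klvc_hd1 x).deriv]
          rw [interior_Iic] at hx
          have h0 : G' x ≤ G' 0 := hmono (le_of_lt hx)
          rw [hG'0] at h0
          simpa [hG'] using h0
      have := hm (le_of_lt h : u ≤ (0:ℝ)) Set.self_mem_Iic (le_of_lt h)
      rw [hG0] at this
      exact this
  simp only [hG] at key
  linarith
lemma sum_expand {S : Type*} [Fintype S] (p f : S → ℝ) (hsum : ∑ s, p s = 1) (c : ℝ) :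
    ∑ s, p s * (f s - c)^2 = (∑ s, p s * f s ^ 2) - 2*c*(∑ s, p s * f s) + c^2 := by
  have : ∀ s, p s * (f s - c)^2 = p s * f s ^2 - 2*c*(p s * f s) + c^2 * p s := by
    intro s; ring
  rw [Finset.sum_congr rfl (fun s _ => this s)]
  rw [Finset.sum_add_distrib, Finset.sum_sub_distrib, ← Finset.mul_sum, ← Finset.mul_sum, hsum]
  ring

lemma dv {S : Type*} [Fintype S] (p₁ p₂ : S → ℝ) (h : S → ℝ)
    (hp₁ : ∀ s, 0 ≤ p₁ s) (hp₁sum : ∑ s, p₁ s = 1)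
    (hp₂ : ∀ s, 0 ≤ p₂ s) (hp₂sum : ∑ s, p₂ s = 1)
    (hac : ∀ s, p₂ s = 0 → p₁ s = 0) :
    ∑ s, p₁ s * h s ≤
      Real.log (∑ s, p₂ s * Real.exp (h s)) + ∑ s, p₁ s * Real.log (p₁ s / p₂ s) := by
  set Z := ∑ s, p₂ s * Real.exp (h s) with hZ
  have hZpos : 0 < Z := by
    have hex : ∃ s₀ ∈ Finset.univ (α := S), 0 < p₂ s₀ * Real.exp (h s₀) := by
      by_contra hc
      push_neg at hc
      have : ∀ s : S, p₂ s = 0 := by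
        intro s
        have h1 := hc s (Finset.mem_univ s)
        have h2 := Real.exp_pos (h s)
        nlinarith [hp₂ s]
      simp [this] at hp₂sum
    exact Finset.sum_pos' (fun s _ => mul_nonneg (hp₂ s) (Real.exp_pos _).le) hex
  -- pointwise inequality
  have key : ∀ s : S, p₁ s * h s - p₁ s * Real.log (p₁ s / p₂ s) - p₁ s * Real.log Z ≤
      p₂ s * Real.exp (h s) / Z - p₁ s := by
    intro s
    rcases eq_or_lt_of_le (hp₁ s) with h0 | hpos
    · rw [← h0]
      simp
      exact div_nonneg (mul_nonneg (hp₂ s) (Real.exp_pos _).le) hZpos.le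
    · have hp2pos : 0 < p₂ s := by
        rcases eq_or_lt_of_le (hp₂ s) with h0 | h; · exact absurd (hac s h0.symm) (by linarith)
        exact h
      have hw : 0 < p₂ s * Real.exp (h s) / (p₁ s * Z) := by positivity
      have hlog := Real.log_le_sub_one_of_pos hw
      have hexpand : Real.log (p₂ s * Real.exp (h s) / (p₁ s * Z)) =
          Real.log (p₂ s) + h s - Real.log (p₁ s) - Real.log Z := by
        rw [Real.log_div (by positivity) (by positivity), Real.log_mul (by positivity) (by positivity),
          Real.log_mul (by positivity) (by positivity), Real.log_exp]
        ring
      have hlogdiv : Real.log (p₁ s / p₂ s) = Real.log (p₁ s) - Real.log (p₂ s) :=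
        Real.log_div (by positivity) (by positivity)
      rw [hexpand] at hlog
      have hfin : p₁ s * (Real.log (p₂ s) + h s - Real.log (p₁ s) - Real.log Z) ≤
          p₂ s * Real.exp (h s) / Z - p₁ s := by
        have h2 : p₁ s * (p₂ s * Real.exp (h s) / (p₁ s * Z) - 1)
            = p₂ s * Real.exp (h s) / Z - p₁ s := by
          field_simp
        calc p₁ s * (Real.log (p₂ s) + h s - Real.log (p₁ s) - Real.log Z)
            ≤ p₁ s * (p₂ s * Real.exp (h s) / (p₁ s * Z) - 1) :=
              mul_le_mul_of_nonneg_left hlog (le_of_lt hpos)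
          _ = _ := h2
      rw [hlogdiv]
      nlinarith [hfin]
  have hsumkey := Finset.sum_le_sum (fun s (_ : s ∈ Finset.univ) => key s)
  have hL : ∑ s, (p₁ s * h s - p₁ s * Real.log (p₁ s / p₂ s) - p₁ s * Real.log Z)
      = (∑ s, p₁ s * h s) - (∑ s, p₁ s * Real.log (p₁ s / p₂ s)) - Real.log Z := by
    rw [Finset.sum_sub_distrib, Finset.sum_sub_distrib, ← Finset.sum_mul, hp₁sum, one_mul]
  have hR : ∑ s, (p₂ s * Real.exp (h s) / Z - p₁ s) = 0 := by
    rw [Finset.sum_sub_distrib, ← Finset.sum_div, ← hZ, div_self (ne_of_gt hZpos), hp₁sum,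
      sub_self]
  rw [hL, hR] at hsumkey
  linarith

lemma sum_lin {S : Type*} [Fintype S] (p f : S → ℝ) (hsum : ∑ s, p s = 1) (c m : ℝ) :
    ∑ s, p s * (c * (f s - m)) = c * ((∑ s, p s * f s) - m) := by
  have h : ∀ s, p s * (c * (f s - m)) = c * (p s * f s) - (c*m) * p s := fun s => by ring
  rw [Finset.sum_congr rfl (fun s _ => h s), Finset.sum_sub_distrib, ← Finset.mul_sum,
    ← Finset.mul_sum, hsum]
  ring

lemma sum_le_of_le {S : Type*} [Fintype S] (p f : S → ℝ) (b : ℝ) (hsum : ∑ s, p s = 1)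
    (hp : ∀ s, 0 ≤ p s) (hfb : ∀ s, f s ≤ b) : ∑ s, p s * f s ≤ b := by
  calc ∑ s, p s * f s ≤ ∑ s, p s * b :=
        Finset.sum_le_sum (fun s _ => mul_le_mul_of_nonneg_left (hfb s) (hp s))
    _ = b := by rw [← Finset.sum_mul, hsum, one_mul]

lemma one_sided {S : Type*} [Fintype S]
    (p₁ p₂ : S → ℝ) (f : S → ℝ) (b α : ℝ)
    (hp₁ : ∀ s, 0 ≤ p₁ s) (hp₁sum : ∑ s, p₁ s = 1)
    (hp₂ : ∀ s, 0 ≤ p₂ s) (hp₂sum : ∑ s, p₂ s = 1)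
    (hac : ∀ s, p₂ s = 0 → p₁ s = 0)
    (hα : 0 < α) (hb : 0 ≤ b)
    (hKL : ∑ s, p₁ s * Real.log (p₁ s / p₂ s) ≤ α)
    (hf : ∀ s, 0 ≤ f s ∧ f s ≤ b) :
    (∑ s, p₁ s * f s) - (∑ s, p₂ s * f s) ≤
      Real.sqrt (2 * ((∑ s, p₂ s * f s ^ 2) - (∑ s, p₂ s * f s) ^ 2) * α) + (2/3) * b * α := by
  set m := ∑ s, p₂ s * f s with hm
  set V := (∑ s, p₂ s * f s ^ 2) - m ^ 2 with hV
  have hVexp : ∑ s, p₂ s * (f s - m)^2 = V := by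
    rw [sum_expand p₂ f hp₂sum m, hV, hm]; ring
  have hV0 : 0 ≤ V := by
    rw [← hVexp]
    exact Finset.sum_nonneg (fun s _ => mul_nonneg (hp₂ s) (sq_nonneg _))
  set t := (∑ s, p₁ s * f s) - m with ht
  have hsqrt0 : 0 ≤ Real.sqrt (2 * V * α) := Real.sqrt_nonneg _
  rcases le_or_gt t 0 with htneg | htpos
  · have : 0 ≤ (2/3) * b * α := by positivity
    linarith
  -- t > 0 case
  have hm0 : 0 ≤ m := Finset.sum_nonneg (fun s _ => mul_nonneg (hp₂ s) (hf s).1)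
  have hE1b : ∑ s, p₁ s * f s ≤ b := sum_le_of_le p₁ f b hp₁sum hp₁ (fun s => (hf s).2)
  have hbpos : 0 < b := by
    rcases eq_or_lt_of_le hb with h0 | h; · exfalso; rw [← h0] at hE1b; linarith
    exact h
  have hzero : ∑ s, p₂ s * (f s - m) = 0 := by
    have := sum_lin p₂ f hp₂sum 1 m
    simp only [one_mul] at this
    rw [this]; ring
  rcases eq_or_lt_of_le hV0 with hVz | hVpos
  · -- V = 0 : all f s = m on support of p₂
    have hfm : ∀ s, p₂ s * Real.exp ((3/(2*b)) * (f s - m)) = p₂ s := by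
      intro s
      rcases eq_or_lt_of_le (hp₂ s) with h0 | hpos
      · rw [← h0]; ring
      · have hterm : p₂ s * (f s - m)^2 = 0 := by
          have hall := (Finset.sum_eq_zero_iff_of_nonneg
            (fun s (_ : s ∈ Finset.univ) => mul_nonneg (hp₂ s) (sq_nonneg (f s - m)))).1
            (by rw [hVexp, ← hVz])
          exact hall s (Finset.mem_univ s)
        have : f s = m := by
          have h2 : (f s - m)^2 = 0 := by
            rcases mul_eq_zero.1 hterm with h | h
            · exact absurd h (ne_of_gt hpos)
            · exact h
          have := pow_eq_zero_iff (n := 2) (by norm_num) |>.1 h2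
          linarith [sub_eq_zero.1 this]
        rw [this]
        simp
    have hZ : ∑ s, p₂ s * Real.exp ((3/(2*b)) * (f s - m)) = 1 := by
      rw [Finset.sum_congr rfl (fun s _ => hfm s), hp₂sum]
    have hdv := dv p₁ p₂ (fun s => (3/(2*b)) * (f s - m)) hp₁ hp₁sum hp₂ hp₂sum hac
    rw [hZ, Real.log_one, zero_add] at hdv
    rw [sum_lin p₁ f hp₁sum (3/(2*b)) m] at hdv
    have : (3/(2*b)) * t ≤ α := le_trans hdv hKL
    have htle : t ≤ (2/3) * b * α := by
      rw [div_mul_eq_mul_div, div_le_iff₀ (by positivity)] at this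
      nlinarith
    linarith
  · -- V > 0
    set D := V + b * t / 3 with hD
    have hDpos : 0 < D := by rw [hD]; positivity
    set lam := t / D with hlam
    have hlampos : 0 < lam := div_pos htpos hDpos
    -- pointwise mgf bound
    have hpt : ∀ s, Real.exp (lam * (f s - m)) ≤
        1 + lam * (f s - m) + (lam * (f s - m))^2 * (D/(2*V)) := by
      intro s
      set u := lam * (f s - m) with hu
      have hub : u ≤ lam * b := by
        have : f s - m ≤ b := by linarith [(hf s).2, hm0]
        exact mul_le_mul_of_nonneg_left this hlampos.le
      have h13 : V / D ≤ 1 - u / 3 := by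
        have heq2 : 1 - lam * b / 3 = V / D := by
          rw [hlam]
          field_simp
          rw [hD]
          ring
        linarith [hub]
      have hphi : 0 ≤ Real.exp u - u - 1 := by linarith [Real.add_one_le_exp u]
      have hkey := exp_key u
      have hA : 2 * (V/D) * (Real.exp u - u - 1) ≤ u^2 := by
        nlinarith [mul_le_mul_of_nonneg_right h13 hphi]
      have hVle : Real.exp u - u - 1 ≤ u^2 * (D/(2*V)) := by
        have hpos2 : (0:ℝ) ≤ D/(2*V) := by positivity
        have h5 := mul_le_mul_of_nonneg_right hA hpos2
        have e : 2*(V/D)*(Real.exp u - u - 1) * (D/(2*V)) = Real.exp u - u - 1 := by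
          field_simp [hDpos.ne', hVpos.ne']
        rw [e] at h5
        exact h5
      linarith
    -- sum the mgf bound
    have hsum3 : ∑ s, p₂ s * (1 + lam * (f s - m) + (lam * (f s - m))^2 * (D/(2*V)))
        = 1 + t^2 / (2*D) := by
      have hterm : ∀ s, p₂ s * (1 + lam * (f s - m) + (lam * (f s - m))^2 * (D/(2*V)))
          = p₂ s + lam * (p₂ s * (f s - m)) + (lam^2 * (D/(2*V))) * (p₂ s * (f s - m)^2) := by
        intro s; ring
      rw [Finset.sum_congr rfl (fun s _ => hterm s), Finset.sum_add_distrib,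
        Finset.sum_add_distrib, ← Finset.mul_sum, ← Finset.mul_sum, hp₂sum, hzero, hVexp]
      rw [hlam]
      field_simp
      ring
    have hZle : ∑ s, p₂ s * Real.exp (lam * (f s - m)) ≤ 1 + t^2/(2*D) := by
      rw [← hsum3]
      exact Finset.sum_le_sum (fun s _ => mul_le_mul_of_nonneg_left (hpt s) (hp₂ s))
    have hZge : 1 ≤ ∑ s, p₂ s * Real.exp (lam * (f s - m)) := by
      have h1 : ∀ s, p₂ s * (1 + lam * (f s - m)) ≤ p₂ s * Real.exp (lam * (f s - m)) := by
        intro s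
        have := Real.add_one_le_exp (lam * (f s - m))
        exact mul_le_mul_of_nonneg_left (by linarith) (hp₂ s)
      have h2 : ∑ s, p₂ s * (1 + lam * (f s - m)) = 1 := by
        have hterm : ∀ s, p₂ s * (1 + lam * (f s - m)) = p₂ s + lam * (p₂ s * (f s - m)) := by
          intro s; ring
        rw [Finset.sum_congr rfl (fun s _ => hterm s), Finset.sum_add_distrib,
          ← Finset.mul_sum, hp₂sum, hzero]
        ring
      calc (1:ℝ) = ∑ s, p₂ s * (1 + lam * (f s - m)) := h2.symm
        _ ≤ _ := Finset.sum_le_sum (fun s _ => h1 s)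
    have hlogZ : Real.log (∑ s, p₂ s * Real.exp (lam * (f s - m))) ≤ t^2/(2*D) := by
      have := Real.log_le_sub_one_of_pos (lt_of_lt_of_le one_pos hZge)
      linarith
    have hdv := dv p₁ p₂ (fun s => lam * (f s - m)) hp₁ hp₁sum hp₂ hp₂sum hac
    rw [sum_lin p₁ f hp₁sum lam m] at hdv
    have hmain : lam * t ≤ t^2/(2*D) + α := by
      have h7 := le_trans hdv (add_le_add hlogZ hKL)
      rw [← ht] at h7
      exact h7
    clear_value m V t D lam
    have ht2 : t^2 ≤ 2*V*α + (2/3)*b*α*t := by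
      have hlamt : lam * t = t^2 / D := by rw [hlam]; field_simp [hDpos.ne']
      rw [hlamt] at hmain
      have h8 := mul_le_mul_of_nonneg_right hmain (le_of_lt hDpos)
      have e1 : t^2/D * D = t^2 := by field_simp
      have e2 : (t^2/(2*D) + α) * D = t^2/2 + α*D := by field_simp
      rw [e1, e2] at h8
      rw [hD] at h8
      linarith only [h8]
    set r := Real.sqrt (2 * V * α) with hr
    have hr2 : r^2 = 2*V*α := Real.sq_sqrt (by positivity)
    by_contra hcon
    push_neg at hcon
    have hc : 0 ≤ (2:ℝ)/3*b*α := by positivity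
    have h1 : 0 ≤ t - r := by linarith
    have h2 : 0 ≤ r*(t - r) := mul_nonneg hsqrt0 h1
    have h3 : 0 < t*(t - r - 2/3*b*α) := mul_pos htpos (by linarith)
    nlinarith only [ht2, h2, h3, hr2]

lemma abs_a {S : Type*} [Fintype S]
    (p₁ p₂ : S → ℝ) (f : S → ℝ) (b α : ℝ)
    (hp₁ : ∀ s, 0 ≤ p₁ s) (hp₁sum : ∑ s, p₁ s = 1)
    (hp₂ : ∀ s, 0 ≤ p₂ s) (hp₂sum : ∑ s, p₂ s = 1)
    (hac : ∀ s, p₂ s = 0 → p₁ s = 0)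
    (hα : 0 < α) (hb : 0 ≤ b)
    (hKL : ∑ s, p₁ s * Real.log (p₁ s / p₂ s) ≤ α)
    (hf : ∀ s, 0 ≤ f s ∧ f s ≤ b) :
    |(∑ s, p₁ s * f s) - ∑ s, p₂ s * f s| ≤
      Real.sqrt (2 * ((∑ s, p₂ s * f s ^ 2) - (∑ s, p₂ s * f s) ^ 2) * α) + (2/3) * b * α := by
  have h1 := one_sided p₁ p₂ f b α hp₁ hp₁sum hp₂ hp₂sum hac hα hb hKL hf
  have hf' : ∀ s, 0 ≤ b - f s ∧ b - f s ≤ b := by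
    intro s; exact ⟨by linarith [(hf s).2], by linarith [(hf s).1]⟩
  have h2 := one_sided p₁ p₂ (fun s => b - f s) b α hp₁ hp₁sum hp₂ hp₂sum hac hα hb hKL hf'
  have hs1 : ∑ s, p₁ s * (b - f s) = b - ∑ s, p₁ s * f s := by
    have h : ∀ s : S, p₁ s * (b - f s) = b * p₁ s - p₁ s * f s := fun s => by ring
    rw [Finset.sum_congr rfl (fun s _ => h s), Finset.sum_sub_distrib, ← Finset.mul_sum,
      hp₁sum, mul_one]
  have hs2 : ∑ s, p₂ s * (b - f s) = b - ∑ s, p₂ s * f s := by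
    have h : ∀ s : S, p₂ s * (b - f s) = b * p₂ s - p₂ s * f s := fun s => by ring
    rw [Finset.sum_congr rfl (fun s _ => h s), Finset.sum_sub_distrib, ← Finset.mul_sum,
      hp₂sum, mul_one]
  have hs3 : ∑ s, p₂ s * (b - f s)^2
      = b^2 - 2*b*(∑ s, p₂ s * f s) + ∑ s, p₂ s * f s ^ 2 := by
    have h : ∀ s : S, p₂ s * (b - f s)^2
        = b^2 * p₂ s - 2*b*(p₂ s * f s) + p₂ s * f s ^ 2 := fun s => by ring
    rw [Finset.sum_congr rfl (fun s _ => h s), Finset.sum_add_distrib, Finset.sum_sub_distrib,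
      ← Finset.mul_sum, ← Finset.mul_sum, hp₂sum, mul_one]
  rw [hs1, hs2, hs3] at h2
  have heq : 2 * ((b^2 - 2*b*(∑ s, p₂ s * f s) + ∑ s, p₂ s * f s ^ 2)
        - (b - ∑ s, p₂ s * f s)^2) * α
      = 2 * ((∑ s, p₂ s * f s ^ 2) - (∑ s, p₂ s * f s)^2) * α := by ring
  rw [heq] at h2
  rw [abs_sub_le_iff]
  exact ⟨h1, by linarith [h2]⟩

lemma var_b1 {S : Type*} [Fintype S]
    (p₁ p₂ : S → ℝ) (f : S → ℝ) (b α : ℝ)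
    (hp₁ : ∀ s, 0 ≤ p₁ s) (hp₁sum : ∑ s, p₁ s = 1)
    (hp₂ : ∀ s, 0 ≤ p₂ s) (hp₂sum : ∑ s, p₂ s = 1)
    (hac : ∀ s, p₂ s = 0 → p₁ s = 0)
    (hα : 0 < α) (hb : 0 ≤ b)
    (hKL : ∑ s, p₁ s * Real.log (p₁ s / p₂ s) ≤ α)
    (hf : ∀ s, 0 ≤ f s ∧ f s ≤ b) :
    (∑ s, p₂ s * f s ^ 2) - (∑ s, p₂ s * f s) ^ 2 ≤
      2 * ((∑ s, p₁ s * f s ^ 2) - (∑ s, p₁ s * f s) ^ 2) + 4 * b ^ 2 * α := by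
  have hA0 : 0 ≤ ∑ s, p₁ s * f s :=
    Finset.sum_nonneg fun s _ => mul_nonneg (hp₁ s) (hf s).1
  have hAb : ∑ s, p₁ s * f s ≤ b := sum_le_of_le p₁ f b hp₁sum hp₁ fun s => (hf s).2
  have hhb : ∀ s, 0 ≤ (f s - ∑ s', p₁ s' * f s')^2 ∧ (f s - ∑ s', p₁ s' * f s')^2 ≤ b^2 :=
    fun s => ⟨sq_nonneg _,
      sq_le_sq' (by linarith [(hf s).1, (hf s).2]) (by linarith [(hf s).1, (hf s).2])⟩
  have habs := abs_a p₁ p₂ (fun s => (f s - ∑ s', p₁ s' * f s')^2) (b^2) α hp₁ hp₁sum hp₂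
    hp₂sum hac hα (by positivity) hKL hhb
  set A := ∑ s, p₁ s * f s with hA
  set x := ∑ s, p₂ s * (f s - A)^2 with hx
  set y := ∑ s, p₁ s * (f s - A)^2 with hy
  have hx0 : 0 ≤ x := by
    rw [hx]; exact Finset.sum_nonneg fun s _ => mul_nonneg (hp₂ s) (sq_nonneg _)
  have hWle : (∑ s, p₂ s * ((f s - A)^2)^2) ≤ b^2 * x := by
    calc ∑ s, p₂ s * ((f s - A)^2)^2 ≤ ∑ s, b^2 * (p₂ s * (f s - A)^2) := by
          refine Finset.sum_le_sum fun s _ => ?_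
          have h1 := (hhb s).1
          have h2 := (hhb s).2
          nlinarith [hp₂ s, mul_le_mul_of_nonneg_left h2 (mul_nonneg (hp₂ s) h1)]
      _ = b^2 * x := by rw [← Finset.mul_sum, hx]
  have hsq : Real.sqrt (2 * ((∑ s, p₂ s * ((f s - A)^2)^2) - x^2) * α) ≤ x/2 + b^2*α := by
    have hbig : 2 * ((∑ s, p₂ s * ((f s - A)^2)^2) - x^2) * α ≤ (x/2 + b^2*α)^2 := by
      nlinarith [mul_le_mul_of_nonneg_right hWle hα.le, hα.le, hx0,
        sq_nonneg (x/2 - b^2*α), mul_nonneg (mul_nonneg hx0 hx0) hα.le]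
    calc Real.sqrt (2 * ((∑ s, p₂ s * ((f s - A)^2)^2) - x^2) * α)
        ≤ Real.sqrt ((x/2 + b^2*α)^2) := Real.sqrt_le_sqrt hbig
      _ = x/2 + b^2*α := Real.sqrt_sq (by positivity)
  have h3 : x - y ≤ |y - x| := by rw [abs_sub_comm]; exact le_abs_self (x - y)
  have hxy : x ≤ 2*y + (10/3)*b^2*α := by
    have h4 := le_trans h3 habs
    linarith [hsq]
  have hyeq : y = (∑ s, p₁ s * f s ^ 2) - A^2 := by
    rw [hy, sum_expand p₁ f hp₁sum A, ← hA]; ring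
  have hxeq : x = (∑ s, p₂ s * f s ^ 2) - 2*A*(∑ s, p₂ s * f s) + A^2 := by
    rw [hx, sum_expand p₂ f hp₂sum A]
  rw [hyeq, hxeq] at hxy
  nlinarith [hxy, sq_nonneg ((∑ s, p₂ s * f s) - A), mul_nonneg (mul_nonneg hb hb) hα.le]

lemma var_b2 {S : Type*} [Fintype S]
    (p₁ p₂ : S → ℝ) (f : S → ℝ) (b α : ℝ)
    (hp₁ : ∀ s, 0 ≤ p₁ s) (hp₁sum : ∑ s, p₁ s = 1)
    (hp₂ : ∀ s, 0 ≤ p₂ s) (hp₂sum : ∑ s, p₂ s = 1)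
    (hac : ∀ s, p₂ s = 0 → p₁ s = 0)
    (hα : 0 < α) (hb : 0 ≤ b)
    (hKL : ∑ s, p₁ s * Real.log (p₁ s / p₂ s) ≤ α)
    (hf : ∀ s, 0 ≤ f s ∧ f s ≤ b) :
    (∑ s, p₁ s * f s ^ 2) - (∑ s, p₁ s * f s) ^ 2 ≤
      2 * ((∑ s, p₂ s * f s ^ 2) - (∑ s, p₂ s * f s) ^ 2) + 4 * b ^ 2 * α := by
  have hA0 : 0 ≤ ∑ s, p₂ s * f s :=
    Finset.sum_nonneg fun s _ => mul_nonneg (hp₂ s) (hf s).1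
  have hAb : ∑ s, p₂ s * f s ≤ b := sum_le_of_le p₂ f b hp₂sum hp₂ fun s => (hf s).2
  have hhb : ∀ s, 0 ≤ (f s - ∑ s', p₂ s' * f s')^2 ∧ (f s - ∑ s', p₂ s' * f s')^2 ≤ b^2 :=
    fun s => ⟨sq_nonneg _,
      sq_le_sq' (by linarith [(hf s).1, (hf s).2]) (by linarith [(hf s).1, (hf s).2])⟩
  have habs := abs_a p₁ p₂ (fun s => (f s - ∑ s', p₂ s' * f s')^2) (b^2) α hp₁ hp₁sum hp₂
    hp₂sum hac hα (by positivity) hKL hhb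
  set A := ∑ s, p₂ s * f s with hA
  set v := ∑ s, p₂ s * (f s - A)^2 with hv
  set y := ∑ s, p₁ s * (f s - A)^2 with hy
  have hv0 : 0 ≤ v := by
    rw [hv]; exact Finset.sum_nonneg fun s _ => mul_nonneg (hp₂ s) (sq_nonneg _)
  have hWle : (∑ s, p₂ s * ((f s - A)^2)^2) ≤ b^2 * v := by
    calc ∑ s, p₂ s * ((f s - A)^2)^2 ≤ ∑ s, b^2 * (p₂ s * (f s - A)^2) := by
          refine Finset.sum_le_sum fun s _ => ?_
          have h1 := (hhb s).1
          have h2 := (hhb s).2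
          nlinarith [hp₂ s, mul_le_mul_of_nonneg_left h2 (mul_nonneg (hp₂ s) h1)]
      _ = b^2 * v := by rw [← Finset.mul_sum, hv]
  have hsq : Real.sqrt (2 * ((∑ s, p₂ s * ((f s - A)^2)^2) - v^2) * α) ≤ v/2 + b^2*α := by
    have hbig : 2 * ((∑ s, p₂ s * ((f s - A)^2)^2) - v^2) * α ≤ (v/2 + b^2*α)^2 := by
      nlinarith [mul_le_mul_of_nonneg_right hWle hα.le, hα.le, hv0,
        sq_nonneg (v/2 - b^2*α), mul_nonneg (mul_nonneg hv0 hv0) hα.le]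
    calc Real.sqrt (2 * ((∑ s, p₂ s * ((f s - A)^2)^2) - v^2) * α)
        ≤ Real.sqrt ((v/2 + b^2*α)^2) := Real.sqrt_le_sqrt hbig
      _ = v/2 + b^2*α := Real.sqrt_sq (by positivity)
  have h3 : y - v ≤ |y - v| := le_abs_self _
  have hxy : y ≤ (3/2)*v + (5/3)*b^2*α := by
    have h4 := le_trans h3 habs
    linarith [hsq]
  have hyeq : y = (∑ s, p₁ s * f s ^ 2) - 2*A*(∑ s, p₁ s * f s) + A^2 := by
    rw [hy, sum_expand p₁ f hp₁sum A]
  have hveq : v = (∑ s, p₂ s * f s ^ 2) - A^2 := by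
    rw [hv, sum_expand p₂ f hp₂sum A, ← hA]; ring
  rw [hyeq, hveq] at hxy
  have hv0' : 0 ≤ (∑ s, p₂ s * f s ^ 2) - A^2 := by rw [← hveq]; exact hv0
  nlinarith [hxy, sq_nonneg ((∑ s, p₁ s * f s) - A), mul_nonneg (mul_nonneg hb hb) hα.le, hv0']

lemma var_c {S : Type*} [Fintype S]
    (p₁ : S → ℝ) (f g : S → ℝ) (b : ℝ)
    (hp₁ : ∀ s, 0 ≤ p₁ s) (hp₁sum : ∑ s, p₁ s = 1)
    (hf : ∀ s, 0 ≤ f s ∧ f s ≤ b) (hg : ∀ s, 0 ≤ g s ∧ g s ≤ b) :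
    (∑ s, p₁ s * f s ^ 2) - (∑ s, p₁ s * f s) ^ 2 ≤
      2 * ((∑ s, p₁ s * g s ^ 2) - (∑ s, p₁ s * g s) ^ 2)
        + 2 * b * ∑ s, p₁ s * |f s - g s| := by
  set c := ∑ s, p₁ s * g s with hc
  have hpt : ∀ s, p₁ s * (f s - c)^2
      ≤ 2*b*(p₁ s * |f s - g s|) + 2*(p₁ s * (g s - c)^2) := by
    intro s
    have habs : |f s - g s| ≤ b := by
      rw [abs_le]
      exact ⟨by linarith [(hf s).1, (hg s).2], by linarith [(hf s).2, (hg s).1]⟩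
    have hangle : (f s - g s)^2 ≤ b * |f s - g s| := by
      nlinarith [sq_abs (f s - g s), abs_nonneg (f s - g s), habs]
    have hkey : (f s - c)^2 ≤ 2*b*|f s - g s| + 2*(g s - c)^2 := by
      nlinarith [hangle, sq_nonneg ((f s - g s) - (g s - c))]
    have := mul_le_mul_of_nonneg_left hkey (hp₁ s)
    nlinarith [this]
  have hsum := Finset.sum_le_sum (fun s (_ : s ∈ Finset.univ) => hpt s)
  have hR : ∑ s, (2*b*(p₁ s * |f s - g s|) + 2*(p₁ s * (g s - c)^2))
      = 2*b*(∑ s, p₁ s * |f s - g s|) + 2*(∑ s, p₁ s * (g s - c)^2) := by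
    rw [Finset.sum_add_distrib, ← Finset.mul_sum, ← Finset.mul_sum]
  rw [hR] at hsum
  have hL : ∑ s, p₁ s * (f s - c)^2
      = (∑ s, p₁ s * f s ^ 2) - 2*c*(∑ s, p₁ s * f s) + c^2 :=
    sum_expand p₁ f hp₁sum c
  have hG : ∑ s, p₁ s * (g s - c)^2 = (∑ s, p₁ s * g s ^ 2) - c^2 := by
    rw [sum_expand p₁ g hp₁sum c, ← hc]; ring
  rw [hL, hG] at hsum
  nlinarith [hsum, sq_nonneg ((∑ s, p₁ s * f s) - c)]




/-- Variance comparison under distribution shift: for probability distributions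
`p₁, p₂` on a finite set with `KL(p₁‖p₂) ≤ α` and functions `f, g` with values in
`[0,b]`:
(a) `|p₁^T f − p₂^T f| ≤ √(2·Var_{p₂}(f)·α) + (2/3)·b·α`;
(b) `Var_{p₂}(f) ≤ 2·Var_{p₁}(f) + 4b²α` and `Var_{p₁}(f) ≤ 2·Var_{p₂}(f) + 4b²α`;
(c) `Var_{p₁}(f) ≤ 2·Var_{p₁}(g) + 2b·p₁^T|f − g|`. -/
theorem kl_variance_comparison {S : Type*} [Fintype S]
    (p₁ p₂ : S → ℝ) (f g : S → ℝ) (b α : ℝ)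
    (hp₁ : ∀ s, 0 ≤ p₁ s) (hp₁sum : ∑ s, p₁ s = 1)
    (hp₂ : ∀ s, 0 ≤ p₂ s) (hp₂sum : ∑ s, p₂ s = 1)
    (hac : ∀ s, p₂ s = 0 → p₁ s = 0)
    (hα : 0 < α)
    (hKL : ∑ s, p₁ s * Real.log (p₁ s / p₂ s) ≤ α)
    (hf : ∀ s, 0 ≤ f s ∧ f s ≤ b) (hg : ∀ s, 0 ≤ g s ∧ g s ≤ b) :
    (|(∑ s, p₁ s * f s) - ∑ s, p₂ s * f s| ≤
        Real.sqrt (2 * ((∑ s, p₂ s * f s ^ 2) - (∑ s, p₂ s * f s) ^ 2) * α)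
          + (2/3) * b * α) ∧
    ((∑ s, p₂ s * f s ^ 2) - (∑ s, p₂ s * f s) ^ 2 ≤
        2 * ((∑ s, p₁ s * f s ^ 2) - (∑ s, p₁ s * f s) ^ 2) + 4 * b ^ 2 * α) ∧
    ((∑ s, p₁ s * f s ^ 2) - (∑ s, p₁ s * f s) ^ 2 ≤
        2 * ((∑ s, p₂ s * f s ^ 2) - (∑ s, p₂ s * f s) ^ 2) + 4 * b ^ 2 * α) ∧
    ((∑ s, p₁ s * f s ^ 2) - (∑ s, p₁ s * f s) ^ 2 ≤
        2 * ((∑ s, p₁ s * g s ^ 2) - (∑ s, p₁ s * g s) ^ 2)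
          + 2 * b * ∑ s, p₁ s * |f s - g s|) := by
  have hne : Nonempty S := by
    by_contra hS
    rw [not_nonempty_iff] at hS
    rw [Finset.univ_eq_empty, Finset.sum_empty] at hp₁sum
    norm_num at hp₁sum
  obtain ⟨s₀⟩ := hne
  have hb : 0 ≤ b := le_trans (hf s₀).1 (hf s₀).2
  exact ⟨abs_a p₁ p₂ f b α hp₁ hp₁sum hp₂ hp₂sum hac hα hb hKL hf,
    var_b1 p₁ p₂ f b α hp₁ hp₁sum hp₂ hp₂sum hac hα hb hKL hf,
    var_b2 p₁ p₂ f b α hp₁ hp₁sum hp₂ hp₂sum hac hα hb hKL hf,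
    var_c p₁ f g b hp₁ hp₁sum hf hg⟩
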